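/- arXiv:1001.1632 — 3 statements merged into one kernel-verified Lean document; each statement's English description precedes it below -/
import Mathlib

section
/- Suppose g : ℝ → ℝ satisfies g(t) ≤ t for all t ≥ T₀ and t − g(t) ∼ (1−c)·t/ln t as t → ∞ (with 0 < c < 1). Then for each fixed k ∈ ℕ, the k-th iterate g^k satisfies g^{k}(t) − g^{k+1}(t) ∼ (1−c)·t/ln t as t → ∞. -/
open Filter

/-- If `g(t) ≤ t` for `t ≥ T₀`, `g` is nondecreasing with `g(t) → ∞`, and
`t − g(t) ∼ (1−c)·t/ln t`, then for each fixed `k`,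
`g^[k](t) − g^[k+1](t) ∼ (1−c)·t/ln t` as `t → ∞`. -/
theorem stmt3 (g : ℝ → ℝ) (c : ℝ) (hc0 : 0 < c) (hc1 : c < 1) (T₀ : ℝ)
    (hle : ∀ t ≥ T₀, g t ≤ t)
    (hmono : Monotone g)
    (htop : Filter.Tendsto g Filter.atTop Filter.atTop)
    (hasym : Filter.Tendsto (fun t => (t - g t) / ((1 - c) * t / Real.log t))
      Filter.atTop (nhds 1))
    (k : ℕ) :
    Filter.Tendsto (fun t => (g^[k] t - g^[k + 1] t) / ((1 - c) * t / Real.log t))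
      Filter.atTop (nhds 1) := by
  have hc : (1 : ℝ) - c ≠ 0 := by linarith
  have hlogtop : Tendsto Real.log atTop atTop := Real.tendsto_log_atTop
  have hiter : ∀ n, Tendsto (g^[n]) atTop atTop := by
    intro n
    induction n with
    | zero => simpa using tendsto_id
    | succ n ih => rw [Function.iterate_succ']; exact htop.comp ih
  -- (t - g t)/t → 0
  have h0 : Tendsto (fun t => (t - g t) / t) atTop (nhds 0) := by
    have h1 : Tendsto (fun t => (1 - c) / Real.log t) atTop (nhds 0) :=
      tendsto_const_nhds.div_atTop hlogtop
    have h2 := hasym.mul h1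
    rw [mul_zero] at h2
    apply h2.congr'
    filter_upwards [eventually_gt_atTop (1:ℝ)] with t ht
    have ht0 : t ≠ 0 := by linarith
    have hlt : Real.log t ≠ 0 := ne_of_gt (Real.log_pos ht)
    field_simp
  -- g t / t → 1
  have hg1 : Tendsto (fun t => g t / t) atTop (nhds 1) := by
    have h2 : Tendsto (fun t => 1 - (t - g t) / t) atTop (nhds (1 - 0)) :=
      tendsto_const_nhds.sub h0
    rw [sub_zero] at h2
    apply h2.congr'
    filter_upwards [eventually_gt_atTop (0:ℝ)] with t ht
    have ht0 : t ≠ 0 := ne_of_gt ht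
    field_simp
    ring
  -- g^[n] t / t → 1
  have hratio : ∀ n, Tendsto (fun t => g^[n] t / t) atTop (nhds 1) := by
    intro n
    induction n with
    | zero =>
      have h1 : Tendsto (fun _ : ℝ => (1:ℝ)) atTop (nhds 1) := tendsto_const_nhds
      apply h1.congr'
      filter_upwards [eventually_gt_atTop (0:ℝ)] with t ht
      simp [div_self (ne_of_gt ht)]
    | succ n ih =>
      have hcomp : Tendsto (fun t => g (g^[n] t) / g^[n] t) atTop (nhds 1) :=
        by simpa [Function.comp_def] using hg1.comp (hiter n)
      have h2 := hcomp.mul ih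
      rw [mul_one] at h2
      apply h2.congr'
      filter_upwards [eventually_gt_atTop (0:ℝ), (hiter n).eventually_gt_atTop 0]
        with t ht hs
      rw [Function.iterate_succ_apply']
      field_simp
  -- log (g^[n] t) / log t → 1
  have hlog : ∀ n, Tendsto (fun t => Real.log (g^[n] t) / Real.log t) atTop (nhds 1) := by
    intro n
    have hlr : Tendsto (fun t => Real.log (g^[n] t / t)) atTop (nhds 0) := by
      have := (Real.continuousAt_log one_ne_zero).tendsto.comp (hratio n)
      simpa [Function.comp_def] using this
    have h2 : Tendsto (fun t => 1 + Real.log (g^[n] t / t) / Real.log t) atTop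
        (nhds (1 + 0)) := tendsto_const_nhds.add (hlr.div_atTop hlogtop)
    rw [add_zero] at h2
    apply h2.congr'
    filter_upwards [eventually_gt_atTop (1:ℝ), (hiter n).eventually_gt_atTop 0]
      with t ht hs
    have ht0 : (0:ℝ) < t := by linarith
    have hlt : Real.log t ≠ 0 := ne_of_gt (Real.log_pos ht)
    rw [Real.log_div (ne_of_gt hs) (ne_of_gt ht0)]
    field_simp
    ring
  -- main
  have hA : Tendsto (fun t =>
      (g^[k] t - g (g^[k] t)) / ((1 - c) * g^[k] t / Real.log (g^[k] t)))
      atTop (nhds 1) := by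
    simpa [Function.comp_def] using hasym.comp (hiter k)
  have hinv : Tendsto (fun t => (Real.log (g^[k] t) / Real.log t)⁻¹) atTop (nhds 1) := by
    have := (hlog k).inv₀ one_ne_zero
    simpa using this
  have h2 := (hA.mul (hratio k)).mul hinv
  rw [mul_one, mul_one] at h2
  apply h2.congr'
  filter_upwards [eventually_gt_atTop (1:ℝ), (hiter k).eventually_gt_atTop 1]
    with t ht hs
  have ht0 : (0:ℝ) < t := by linarith
  have hs0 : (0:ℝ) < g^[k] t := by linarith
  have hlt : Real.log t ≠ 0 := ne_of_gt (Real.log_pos ht)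
  have hls : Real.log (g^[k] t) ≠ 0 := ne_of_gt (Real.log_pos hs)
  rw [Function.iterate_succ_apply']
  field_simp
end

section
/- Suppose g : ℝ → ℝ is nondecreasing with g(t) ≤ t and t − g(t) = O(t/ln t) as t → ∞. Then for each fixed n ∈ ℕ there exists T₁ such that for all t ≥ T₁, g^{n+1}(t) ≥ t·(1 − (n+2)·C/ln t) ≥ t/2, where C is the implied constant; in particular g^{n+1}(t) → ∞ as t → ∞. -/
open Filter

/-- If `g` is nondecreasing, `g(t) ≤ t`, and `t − g(t) ≤ C·t/ln t` eventually, then for each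
fixed `n` there is `T₁` such that for `t ≥ T₁`,
`g^[n+1](t) ≥ t·(1 − (n+2)·C/ln t) ≥ t/2`; in particular `g^[n+1](t) → ∞`. -/
theorem stmt4 (g : ℝ → ℝ) (hmono : Monotone g) (hle : ∀ t, g t ≤ t)
    (C : ℝ) (hC : 0 < C)
    (hO : ∀ᶠ t in Filter.atTop, t - g t ≤ C * t / Real.log t)
    (n : ℕ) :
    (∃ T₁ : ℝ, ∀ t ≥ T₁,
        t * (1 - ((n : ℝ) + 2) * C / Real.log t) ≤ g^[n + 1] t ∧
        t / 2 ≤ t * (1 - ((n : ℝ) + 2) * C / Real.log t)) ∧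
      Filter.Tendsto (g^[n + 1]) Filter.atTop Filter.atTop := by
  obtain ⟨T₀, hT₀⟩ := eventually_atTop.mp hO
  have hlog2 : Tendsto (fun t : ℝ => Real.log (t / 2)) atTop atTop :=
    Real.tendsto_log_atTop.comp (tendsto_id.atTop_div_const (by norm_num))
  have hE : ∀ᶠ t : ℝ in atTop,
      T₀ ≤ t / 2 ∧ 2 * ((n : ℝ) + 1) * C ≤ Real.log (t / 2) ∧
      ((n : ℝ) + 2) * Real.log 2 ≤ Real.log t ∧
      2 * ((n : ℝ) + 2) * C ≤ Real.log t ∧ 1 ≤ t := by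
    have e1 : ∀ᶠ t : ℝ in atTop, T₀ ≤ t / 2 :=
      (tendsto_id.atTop_div_const (show (0:ℝ) < 2 by norm_num)).eventually_ge_atTop T₀
    have e2 := hlog2.eventually_ge_atTop (2 * ((n : ℝ) + 1) * C)
    have e3 := Real.tendsto_log_atTop.eventually_ge_atTop (((n : ℝ) + 2) * Real.log 2)
    have e4 := Real.tendsto_log_atTop.eventually_ge_atTop (2 * ((n : ℝ) + 2) * C)
    have e5 : ∀ᶠ t : ℝ in atTop, (1:ℝ) ≤ t := eventually_ge_atTop 1
    filter_upwards [e1, e2, e3, e4, e5] with t h1 h2 h3 h4 h5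
    exact ⟨h1, h2, h3, h4, h5⟩
  obtain ⟨T₁, hT₁⟩ := eventually_atTop.mp hE
  have main : ∀ t ≥ T₁,
      t * (1 - ((n : ℝ) + 2) * C / Real.log t) ≤ g^[n + 1] t ∧
      t / 2 ≤ t * (1 - ((n : ℝ) + 2) * C / Real.log t) := by
    intro t ht
    obtain ⟨h1, h2, h3, h4, h5⟩ := hT₁ t ht
    have ht0 : (0 : ℝ) < t := lt_of_lt_of_le one_pos h5
    have hlogt2pos : 0 < Real.log (t / 2) := lt_of_lt_of_le (by positivity) h2
    have hlogtpos : 0 < Real.log t := lt_of_lt_of_le (by positivity) h4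
    set D := C * t / Real.log (t / 2) with hD
    have hD0 : 0 ≤ D := by positivity
    have hnD : ((n : ℝ) + 1) * D ≤ t / 2 := by
      have e1 : ((n : ℝ) + 1) * (C * t / Real.log (t / 2))
          = (((n : ℝ) + 1) * (C * t)) / Real.log (t / 2) := by ring
      rw [hD, e1, div_le_div_iff₀ hlogt2pos (by norm_num : (0:ℝ) < 2)]
      nlinarith [mul_le_mul_of_nonneg_right h2 ht0.le]
    have key : ∀ k : ℕ, k ≤ n + 1 → t - k * D ≤ g^[k] t ∧ g^[k] t ≤ t := by
      intro k
      induction k with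
      | zero => intro _; simpa using ⟨by linarith, le_refl t⟩
      | succ k ih =>
        intro hk
        obtain ⟨hx1, hx2⟩ := ih (le_trans (Nat.le_succ k) hk)
        set x := g^[k] t with hxdef
        have hkn : (k : ℝ) ≤ (n : ℝ) + 1 := by
          have : (k : ℝ) + 1 ≤ (n : ℝ) + 1 := by exact_mod_cast hk
          linarith
        have hkD : (k : ℝ) * D ≤ t / 2 :=
          le_trans (by nlinarith) hnD
        have hxhalf : t / 2 ≤ x := by linarith
        have hxpos : 0 < x := lt_of_lt_of_le (by positivity) hxhalf
        have hgx : x - g x ≤ C * x / Real.log x := hT₀ x (le_trans h1 hxhalf)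
        have hlogx : Real.log (t / 2) ≤ Real.log x :=
          Real.log_le_log (by positivity) hxhalf
        have hlogxpos : 0 < Real.log x := lt_of_lt_of_le hlogt2pos hlogx
        have hCx : C * x / Real.log x ≤ D := by
          rw [hD]
          gcongr
        have : g (g^[k] t) = g^[k+1] t := by
          rw [Function.iterate_succ_apply']
        constructor
        · rw [← this]
          have hstep : x - D ≤ g x := by linarith
          push_cast
          linarith
        · rw [← this]
          exact le_trans (hle x) hx2
    obtain ⟨hfin, _⟩ := key (n + 1) le_rfl
    have hcmp : ((n : ℝ) + 1) * D ≤ t * (((n : ℝ) + 2) * C / Real.log t) := by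
      have e1 : ((n : ℝ) + 1) * (C * t / Real.log (t / 2))
          = (((n : ℝ) + 1) * (C * t)) / Real.log (t / 2) := by ring
      have e2 : t * (((n : ℝ) + 2) * C / Real.log t)
          = (((n : ℝ) + 2) * (C * t)) / Real.log t := by ring
      rw [hD, e1, e2, div_le_div_iff₀ hlogt2pos hlogtpos]
      have hlog2t : Real.log (t / 2) = Real.log t - Real.log 2 := by
        rw [Real.log_div (ne_of_gt ht0) (by norm_num)]
      have hlog2pos : (0 : ℝ) < Real.log 2 := Real.log_pos (by norm_num)
      rw [hlog2t]
      nlinarith [mul_pos hC ht0, h3]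
    constructor
    · calc t * (1 - ((n : ℝ) + 2) * C / Real.log t)
          = t - t * (((n : ℝ) + 2) * C / Real.log t) := by ring
        _ ≤ t - ((n : ℝ) + 1) * D := by linarith
        _ ≤ g^[n + 1] t := by
            have := hfin
            push_cast at this
            linarith
    · have hhalf : ((n : ℝ) + 2) * C / Real.log t ≤ 1 / 2 := by
        rw [div_le_div_iff₀ hlogtpos (by norm_num : (0:ℝ) < 2)]
        linarith
      nlinarith
  refine ⟨⟨T₁, main⟩, ?_⟩
  apply tendsto_atTop_mono' _ _ (tendsto_id.atTop_div_const (by norm_num : (0:ℝ) < 2))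
  filter_upwards [eventually_ge_atTop T₁] with t ht
  exact le_trans (main t ht).2 (main t ht).1
end

section
/- Suppose g : ℝ → ℝ is nondecreasing with t − g(t) ∼ (1−c)·t/ln t as t → ∞, 0 < c < 1. Then for any fixed ε > 0 and fixed n ∈ ℕ, there exists T₁ such that for all t ≥ T₁: g^{n+1}(t) > t·(1 − (1+ε)(1−c)(n+1)/ln t). -/
open Filter

/-- Quantitative lower bound for iterates: if `g` is nondecreasing and
`t − g(t) ∼ (1−c)·t/ln t`, then for any `ε > 0` and fixed `n`, eventually
`g^[n+1](t) > t·(1 − (1+ε)(1−c)(n+1)/ln t)`. -/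
theorem stmt15 (g : ℝ → ℝ) (hmono : Monotone g) (c : ℝ) (hc0 : 0 < c) (hc1 : c < 1)
    (hasym : Filter.Tendsto (fun t => (t - g t) / ((1 - c) * t / Real.log t))
      Filter.atTop (nhds 1))
    (ε : ℝ) (hε : 0 < ε) (n : ℕ) :
    ∃ T₁ : ℝ, ∀ t ≥ T₁,
      t * (1 - (1 + ε) * (1 - c) * ((n : ℝ) + 1) / Real.log t) < g^[n + 1] t := by
  have h1c : (0:ℝ) < 1 - c := by linarith
  set δ : ℝ := (1 + ε/2) * (1 - c) with hδdef
  set Δ : ℝ := (1 + ε) * (1 - c) with hΔdef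
  clear_value δ Δ
  have hδ0 : 0 < δ := by rw [hδdef]; positivity
  have hΔ0 : 0 < Δ := by rw [hΔdef]; positivity
  -- (A) eventually t - g t < δ t / log t
  have hA : ∀ᶠ t in atTop, t - g t < δ * t / Real.log t := by
    have h2 : ∀ᶠ t in atTop, (t - g t) / ((1 - c) * t / Real.log t) < 1 + ε/2 :=
      hasym.eventually_lt_const (by linarith)
    filter_upwards [h2, eventually_gt_atTop 1] with t h2 ht1
    have ht0 : 0 < t := by linarith
    have hlog : 0 < Real.log t := Real.log_pos ht1
    have hD : 0 < (1 - c) * t / Real.log t := by positivity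
    have := (div_lt_iff₀ hD).mp h2
    calc t - g t < (1 + ε/2) * ((1 - c) * t / Real.log t) := this
      _ = δ * t / Real.log t := by rw [hδdef]; ring
  -- main induction
  have main : ∀ m : ℕ, ∀ᶠ t in atTop,
      t * (1 - Δ * ((m : ℝ) + 1) / Real.log t) < g^[m + 1] t := by
    intro m
    induction m with
    | zero =>
      filter_upwards [hA, eventually_gt_atTop 1] with t hAt ht1
      have ht0 : 0 < t := by linarith
      have hlog : 0 < Real.log t := Real.log_pos ht1
      have hδΔ : δ * t / Real.log t ≤ Δ * t / Real.log t := by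
        gcongr
        nlinarith
      have hit : g^[0 + 1] t = g t := by norm_num
      have heq0 : t * (1 - Δ * (((0:ℕ):ℝ) + 1) / Real.log t) = t - Δ * t / Real.log t := by
        field_simp; ring
      rw [hit, heq0]
      linarith
    | succ k ih =>
      -- factor tends to 1
      have hfac : Tendsto (fun t => 1 - Δ * ((k:ℝ) + 1) / Real.log t) atTop (nhds 1) := by
        have h0 : Tendsto (fun t => Δ * ((k:ℝ) + 1) / Real.log t) atTop (nhds 0) := by
          simpa [div_eq_mul_inv] using ((tendsto_inv_atTop_zero.comp Real.tendsto_log_atTop).const_mul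
            (Δ * ((k:ℝ) + 1)))
        simpa using (tendsto_const_nhds.sub h0 :
          Tendsto (fun t => 1 - Δ * ((k:ℝ) + 1) / Real.log t) atTop (nhds (1 - 0)))
      have hs_tendsto : Tendsto (fun t => t * (1 - Δ * ((k:ℝ) + 1) / Real.log t))
          atTop atTop := tendsto_id.atTop_mul_pos one_pos hfac
      have hcomp := hs_tendsto.eventually hA
      have hfac_ev : ∀ᶠ t in atTop, Real.exp (-1) < 1 - Δ * ((k:ℝ) + 1) / Real.log t :=
        hfac.eventually_const_lt (by
          have := Real.exp_lt_one_iff.mpr (by norm_num : (-1:ℝ) < 0); linarith)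
      have hlog_big : ∀ᶠ t in atTop, 2 * (1 + ε) / ε ≤ Real.log t :=
        Real.tendsto_log_atTop.eventually_ge_atTop _
      filter_upwards [ih, hcomp, hfac_ev, hlog_big, eventually_gt_atTop 1] with t iht hct hFt hut ht1
      have ht0 : 0 < t := by linarith
      set u := Real.log t with hu_def
      clear_value u
      have hu : 0 < u := hu_def ▸ Real.log_pos ht1
      set F := 1 - Δ * ((k:ℝ) + 1) / u with hF_def
      clear_value F
      set s := t * F with hs_def
      clear_value s
      have hF0 : 0 < F := lt_trans (Real.exp_pos _) hFt
      have hs0 : 0 < s := hs_def ▸ mul_pos ht0 hF0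
      have hF1 : F ≤ 1 := by
        have h : 0 ≤ Δ * ((k:ℝ) + 1) / u := by positivity
        rw [hF_def]; linarith
      have hst : s ≤ t := by
        rw [hs_def]; nlinarith
      set L := Real.log s with hL_def
      clear_value L
      have hlogF : -1 ≤ Real.log F := by
        rw [← Real.log_exp (-1)]
        exact Real.log_le_log (Real.exp_pos _) (le_of_lt hFt)
      have hLeq : L = u + Real.log F := by
        rw [hL_def, hs_def, Real.log_mul (ne_of_gt ht0) (ne_of_gt hF0), hu_def]
      have hLu : u - 1 ≤ L := by rw [hLeq]; linarith
      have hL0 : 0 < L := by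
        have : 2 * (1 + ε) / ε > 1 := by
          rw [gt_iff_lt, lt_div_iff₀ hε]; nlinarith
        linarith
      -- key: δ * u ≤ Δ * L
      have hkey : δ * u ≤ Δ * L := by
        have h1 : Δ * (u - 1) ≤ Δ * L := by nlinarith
        have h2 : δ * u ≤ Δ * (u - 1) := by
          have hεu : 2 * (1 + ε) ≤ ε * u := by
            rw [div_le_iff₀ hε] at hut; linarith
          rw [hδdef, hΔdef]; nlinarith
        linarith
      -- δ * s / L ≤ Δ * t / u
      have hdiv : δ * s / L ≤ Δ * t / u := by
        rw [div_le_div_iff₀ hL0 hu]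
        have h1 : δ * s * u ≤ δ * t * u := by
          calc δ * s * u = (δ * u) * s := by ring
            _ ≤ (δ * u) * t := mul_le_mul_of_nonneg_left hst (by positivity)
            _ = δ * t * u := by ring
        have h2 : δ * t * u ≤ Δ * t * L := by
          calc δ * t * u = t * (δ * u) := by ring
            _ ≤ t * (Δ * L) := mul_le_mul_of_nonneg_left hkey (le_of_lt ht0)
            _ = Δ * t * L := by ring
        linarith
      -- assemble
      have hiter : g^[k + 1 + 1] t = g (g^[k+1] t) := Function.iterate_succ_apply' g (k+1) t
      have hmon : g s ≤ g (g^[k+1] t) := hmono (le_of_lt iht)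
      have heq : t * (1 - Δ * (((k:ℕ)+1 : ℕ) + 1) / u) = s - Δ * t / u := by
        rw [hs_def, hF_def]
        push_cast
        field_simp
        ring
      rw [hiter, heq]
      have : s - g s < δ * s / L := hct
      linarith
  obtain ⟨T₁, hT₁⟩ := eventually_atTop.mp (main n)
  exact ⟨T₁, hT₁⟩
end
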